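/- Let R be an associative ring with identity. The formal power series ring R[[x]] is a weakly √JU ring if and only if R is a weakly √JU ring. -/

import Mathlib

/-- `√J(R)`: elements with some power in the Jacobson radical. -/
def sqrtJ (R : Type*) [Ring R] : Set R :=
  {x | ∃ n : ℕ, 1 ≤ n ∧ x ^ n ∈ Ideal.jacobson (⊥ : Ideal R)}

/-- `R` is a weakly `√JU` ring: every unit is `1 + j` or `-1 + j` with `j ∈ √J(R)`. -/
def IsWSqrtJU (R : Type*) [Ring R] : Prop :=
  ∀ u : Rˣ, ∃ j ∈ sqrtJ R, (u : R) = 1 + j ∨ (u : R) = -1 + j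

/-- `R` is a `√JU` ring: every unit is `1 + j` with `j ∈ √J(R)`. -/
def IsSqrtJU (R : Type*) [Ring R] : Prop :=
  ∀ u : Rˣ, ∃ j ∈ sqrtJ R, (u : R) = 1 + j

/-- `R` is a weakly `UU` ring: every unit is `±1` plus a nilpotent. -/
def IsWUU (R : Type*) [Ring R] : Prop :=
  ∀ u : Rˣ, ∃ q : R, IsNilpotent q ∧ ((u : R) = 1 + q ∨ (u : R) = -1 + q)

lemma ker_le_jacobson_powerSeries {R : Type*} [Ring R] :
    RingHom.ker (PowerSeries.constantCoeff (R := R)) ≤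
      Ideal.jacobson (⊥ : Ideal (PowerSeries R)) := by
  intro g hg
  rw [Ideal.mem_jacobson_iff]
  intro y
  have hu : IsUnit (y * g + 1) := by
    rw [PowerSeries.isUnit_iff_constantCoeff]
    simp [RingHom.mem_ker.mp hg]
  obtain ⟨u, hu⟩ := hu
  refine ⟨(↑u⁻¹ : PowerSeries R), ?_⟩
  have : (↑u⁻¹ : PowerSeries R) * (y * g + 1) = 1 := by
    rw [← hu]; exact u.inv_mul
  rw [Ideal.mem_bot, mul_assoc, sub_eq_zero, ← this, mul_add, mul_one]

lemma mem_jacobson_powerSeries_iff {R : Type*} [Ring R] (f : PowerSeries R) :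
    f ∈ Ideal.jacobson (⊥ : Ideal (PowerSeries R)) ↔
      PowerSeries.constantCoeff (R := R) f ∈ Ideal.jacobson (⊥ : Ideal R) := by
  have hsurj : Function.Surjective (PowerSeries.constantCoeff (R := R)) :=
    fun r => ⟨PowerSeries.C (R := R) r, PowerSeries.constantCoeff_C r⟩
  have h1 : Ideal.comap (PowerSeries.constantCoeff (R := R)) (Ideal.jacobson (⊥ : Ideal R)) =
      (Ideal.comap (PowerSeries.constantCoeff (R := R)) (⊥ : Ideal R)).jacobson :=
    Ideal.comap_jacobson_of_surjective hsurj
  have hker : Ideal.comap (PowerSeries.constantCoeff (R := R)) (⊥ : Ideal R) =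
      RingHom.ker (PowerSeries.constantCoeff (R := R)) := rfl
  have h2 : (RingHom.ker (PowerSeries.constantCoeff (R := R))).jacobson =
      Ideal.jacobson (⊥ : Ideal (PowerSeries R)) := by
    refine le_antisymm ?_ (Ideal.jacobson_mono bot_le)
    have := Ideal.jacobson_mono (ker_le_jacobson_powerSeries (R := R))
    rwa [Ideal.jacobson_idem] at this
  constructor
  · intro hf
    rw [← h2, ← hker, ← h1] at hf
    exact hf
  · intro hf
    rw [← h2, ← hker, ← h1]
    exact hf

lemma mem_sqrtJ_powerSeries_iff {R : Type*} [Ring R] (f : PowerSeries R) :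
    f ∈ sqrtJ (PowerSeries R) ↔ PowerSeries.constantCoeff (R := R) f ∈ sqrtJ R := by
  constructor
  · rintro ⟨n, hn, hmem⟩
    exact ⟨n, hn, by rw [← map_pow]; exact (mem_jacobson_powerSeries_iff _).mp hmem⟩
  · rintro ⟨n, hn, hmem⟩
    exact ⟨n, hn, (mem_jacobson_powerSeries_iff _).mpr (by rwa [map_pow])⟩

theorem stmt18 {R : Type*} [Ring R] :
    IsWSqrtJU (PowerSeries R) ↔ IsWSqrtJU R := by
  constructor
  · intro h u
    obtain ⟨j, hj, heq⟩ := h (Units.map (PowerSeries.C (R := R) : R →+* PowerSeries R).toMonoidHom u)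
    refine ⟨PowerSeries.constantCoeff (R := R) j, (mem_sqrtJ_powerSeries_iff j).mp hj, ?_⟩
    rcases heq with heq | heq
    · left
      have := congrArg (PowerSeries.constantCoeff (R := R)) heq
      simpa using this
    · right
      have := congrArg (PowerSeries.constantCoeff (R := R)) heq
      simpa using this
  · intro h U
    obtain ⟨j₀, hj₀, heq⟩ :=
      h (Units.map (PowerSeries.constantCoeff (R := R) : PowerSeries R →+* R).toMonoidHom U)
    rcases heq with heq | heq
    · refine ⟨(U : PowerSeries R) - 1, ?_, Or.inl (by abel)⟩
      rw [mem_sqrtJ_powerSeries_iff]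
      have : PowerSeries.constantCoeff (R := R) ((U : PowerSeries R) - 1) = j₀ := by
        simp only [map_sub, map_one]
        have : PowerSeries.constantCoeff (R := R) (U : PowerSeries R) = 1 + j₀ := heq
        rw [this]; abel
      rwa [this]
    · refine ⟨(U : PowerSeries R) + 1, ?_, Or.inr (by abel)⟩
      rw [mem_sqrtJ_powerSeries_iff]
      have : PowerSeries.constantCoeff (R := R) ((U : PowerSeries R) + 1) = j₀ := by
        simp only [map_add, map_one]
        have : PowerSeries.constantCoeff (R := R) (U : PowerSeries R) = -1 + j₀ := heq
        rw [this]; abel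
      rwa [this]
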